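/- Let N ≥ 1 and let ψ be a unit vector in the N-qubit space ℂ^{2^N} with ⟨S_y⟩_ψ = 0. Set C = ⟨S_x⟩_ψ/(N/2) and ζ² = ⟨S_y²⟩_ψ/(N/4) (one has C² ≤ 1). If ζ² < (1/2)(1 − √(1 − C²)), then 4 Var_ψ(S_z) > 2N; that is, any pure state violating the two-setting Bell-correlation witness has quantum Fisher information F(ψ, S_z) exceeding 2N, twice the separable-state bound. -/

import Mathlib

open Matrix Finset

/-- Pauli matrix σx. -/
def σx : Matrix (Fin 2) (Fin 2) ℂ := !![0, 1; 1, 0]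

/-- Pauli matrix σy. -/
def σy : Matrix (Fin 2) (Fin 2) ℂ := !![0, -Complex.I; Complex.I, 0]

/-- Pauli matrix σz. -/
def σz : Matrix (Fin 2) (Fin 2) ℂ := !![1, 0; 0, -1]

/-- The single-qubit operator `M` acting on the `i`-th tensor factor of the
`N`-qubit space `ℂ^{2^N}` (identity on all other factors). -/
def siteOp {N : ℕ} (M : Matrix (Fin 2) (Fin 2) ℂ) (i : Fin N) :
    Matrix (Fin N → Fin 2) (Fin N → Fin 2) ℂ :=
  Matrix.of fun x y => M (x i) (y i) * ∏ j ∈ univ.erase i, if x j = y j then 1 else 0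

/-- The collective spin operator `(1/2) Σᵢ M⁽ⁱ⁾`. -/
noncomputable def collSpin {N : ℕ} (M : Matrix (Fin 2) (Fin 2) ℂ) :
    Matrix (Fin N → Fin 2) (Fin N → Fin 2) ℂ :=
  (2 : ℂ)⁻¹ • ∑ i : Fin N, siteOp M i

/-- Expectation `⟨ψ, A ψ⟩` (real part). -/
noncomputable def expval {N : ℕ} (A : Matrix (Fin N → Fin 2) (Fin N → Fin 2) ℂ)
    (ψ : (Fin N → Fin 2) → ℂ) : ℝ :=
  (star ψ ⬝ᵥ A.mulVec ψ).re

/-- Variance `⟨A²⟩_ψ − ⟨A⟩_ψ²`. -/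
noncomputable def variance {N : ℕ} (A : Matrix (Fin N → Fin 2) (Fin N → Fin 2) ℂ)
    (ψ : (Fin N → Fin 2) → ℂ) : ℝ :=
  expval (A * A) ψ - (expval A ψ) ^ 2

/- ### Auxiliary lemmas -/

lemma delta_eq {N : ℕ} (i : Fin N) (x y : Fin N → Fin 2) :
    (∏ j ∈ univ.erase i, if x j = y j then (1:ℂ) else 0)
      = if (∀ k, k ≠ i → x k = y k) then 1 else 0 := by
  rw [Finset.prod_boole]
  congr 1
  simp only [eq_iff_iff]
  constructor
  · intro h k hk; exact h k (by simp [hk])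
  · intro h k hk; exact h k (by simpa using hk)

lemma sum_update {N : ℕ} (i : Fin N) (x : Fin N → Fin 2) (f : (Fin N → Fin 2) → ℂ) :
    (∑ z : Fin N → Fin 2, if (∀ k, k ≠ i → x k = z k) then f z else 0)
      = ∑ a : Fin 2, f (Function.update x i a) := by
  have key : ∀ z : Fin N → Fin 2,
      (if (∀ k, k ≠ i → x k = z k) then f z else 0)
        = ∑ a : Fin 2, if z = Function.update x i a then f z else 0 := by
    intro z
    by_cases h : ∀ k, k ≠ i → x k = z k
    · rw [if_pos h]
      have hz : ∀ a : Fin 2, z = Function.update x i a ↔ a = z i := by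
        intro a
        constructor
        · intro ha; rw [ha]; simp
        · intro ha; subst ha; funext k
          by_cases hk : k = i
          · subst hk; simp
          · simp [Function.update_of_ne hk, (h k hk).symm]
      simp only [hz]
      simp
    · rw [if_neg h]
      symm
      apply Finset.sum_eq_zero
      intro a _
      rw [if_neg]
      intro hz
      apply h
      intro k hk
      rw [hz, Function.update_of_ne hk]
  rw [Finset.sum_congr rfl (fun z _ => key z), Finset.sum_comm]
  simp [Finset.sum_ite_eq']

lemma siteOp_mul_same {N : ℕ} (M M' : Matrix (Fin 2) (Fin 2) ℂ) (i : Fin N) :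
    siteOp M i * siteOp M' i = siteOp (M * M') i := by
  ext x y
  simp only [Matrix.mul_apply, siteOp, Matrix.of_apply, delta_eq]
  have step : ∀ z : Fin N → Fin 2,
      (M (x i) (z i) * if (∀ k, k ≠ i → x k = z k) then (1:ℂ) else 0) *
        (M' (z i) (y i) * if (∀ k, k ≠ i → z k = y k) then (1:ℂ) else 0)
      = if (∀ k, k ≠ i → x k = z k) then
          (M (x i) (z i) * (M' (z i) (y i) * if (∀ k, k ≠ i → z k = y k) then (1:ℂ) else 0)) else 0 := by
    intro z
    by_cases h : ∀ k, k ≠ i → x k = z k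
    · rw [if_pos h, if_pos h]; ring
    · rw [if_neg h, if_neg h]; ring
  rw [Finset.sum_congr rfl (fun z _ => step z), sum_update]
  have step2 : ∀ a : Fin 2,
      M (x i) (Function.update x i a i) *
        (M' (Function.update x i a i) (y i) *
          if (∀ k, k ≠ i → Function.update x i a k = y k) then (1:ℂ) else 0)
      = M (x i) a * M' a (y i) * if (∀ k, k ≠ i → x k = y k) then (1:ℂ) else 0 := by
    intro a
    have h1 : Function.update x i a i = a := by simp
    have h2 : (∀ k, k ≠ i → Function.update x i a k = y k) ↔ (∀ k, k ≠ i → x k = y k) := by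
      constructor <;> intro h k hk <;> have := h k hk <;>
        simpa [Function.update_of_ne hk] using this
    rw [h1]
    rw [if_congr h2 rfl rfl]
    ring
  rw [Finset.sum_congr rfl (fun a _ => step2 a)]
  rw [← Finset.sum_mul]

lemma siteOp_mul_ne {N : ℕ} (M M' : Matrix (Fin 2) (Fin 2) ℂ) {i j : Fin N} (hij : i ≠ j)
    (x y : Fin N → Fin 2) :
    (siteOp M i * siteOp M' j) x y
      = M (x i) (y i) * M' (x j) (y j) *
        if (∀ k, k ≠ i → k ≠ j → x k = y k) then 1 else 0 := by
  simp only [Matrix.mul_apply, siteOp, Matrix.of_apply, delta_eq]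
  have step : ∀ z : Fin N → Fin 2,
      (M (x i) (z i) * if (∀ k, k ≠ i → x k = z k) then (1:ℂ) else 0) *
        (M' (z j) (y j) * if (∀ k, k ≠ j → z k = y k) then (1:ℂ) else 0)
      = if (∀ k, k ≠ i → x k = z k) then
          (M (x i) (z i) * (M' (z j) (y j) *
            if (∀ k, k ≠ j → z k = y k) then (1:ℂ) else 0)) else 0 := by
    intro z
    by_cases h : ∀ k, k ≠ i → x k = z k
    · rw [if_pos h, if_pos h]; ring
    · rw [if_neg h, if_neg h]; ring
  rw [Finset.sum_congr rfl (fun z _ => step z), sum_update]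
  have step2 : ∀ a : Fin 2,
      M (x i) (Function.update x i a i) *
        (M' (Function.update x i a j) (y j) *
          if (∀ k, k ≠ j → Function.update x i a k = y k) then (1:ℂ) else 0)
      = M (x i) a * (M' (x j) (y j) *
          if (a = y i ∧ ∀ k, k ≠ i → k ≠ j → x k = y k) then (1:ℂ) else 0) := by
    intro a
    have h1 : Function.update x i a i = a := by simp
    have h1' : Function.update x i a j = x j := Function.update_of_ne (Ne.symm hij) _ _
    have h2 : (∀ k, k ≠ j → Function.update x i a k = y k)
        ↔ (a = y i ∧ ∀ k, k ≠ i → k ≠ j → x k = y k) := by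
      constructor
      · intro h
        refine ⟨by have := h i hij; rwa [h1] at this, fun k hki hkj => ?_⟩
        have := h k hkj; rwa [Function.update_of_ne hki] at this
      · rintro ⟨ha, h⟩ k hkj
        by_cases hki : k = i
        · subst hki; rwa [h1]
        · rw [Function.update_of_ne hki]; exact h k hki hkj
    rw [h1, h1', if_congr h2 rfl rfl]
  rw [Finset.sum_congr rfl (fun a _ => step2 a)]
  simp only [ite_and, mul_ite, mul_zero, Finset.sum_ite_eq', Finset.mem_univ, if_true]
  rw [mul_assoc]

lemma siteOp_comm {N : ℕ} (M M' : Matrix (Fin 2) (Fin 2) ℂ) {i j : Fin N} (hij : i ≠ j) :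
    siteOp M i * siteOp M' j = siteOp M' j * siteOp M i := by
  ext x y
  rw [siteOp_mul_ne M M' hij, siteOp_mul_ne M' M (Ne.symm hij)]
  have h : (∀ k, k ≠ i → k ≠ j → x k = y k) ↔ (∀ k, k ≠ j → k ≠ i → x k = y k) := by
    constructor <;> intro h k h1 h2 <;> exact h k h2 h1
  rw [if_congr h rfl rfl]
  ring

lemma siteOp_sub {N : ℕ} (M M' : Matrix (Fin 2) (Fin 2) ℂ) (i : Fin N) :
    siteOp (M - M') i = siteOp M i - siteOp M' i := by
  ext x y
  simp [siteOp, sub_mul]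

lemma siteOp_smul {N : ℕ} (c : ℂ) (M : Matrix (Fin 2) (Fin 2) ℂ) (i : Fin N) :
    siteOp (c • M) i = c • siteOp M i := by
  ext x y
  simp [siteOp, mul_assoc]

lemma siteOp_conjTranspose {N : ℕ} (M : Matrix (Fin 2) (Fin 2) ℂ) (i : Fin N) :
    (siteOp M i)ᴴ = siteOp Mᴴ i := by
  ext x y
  simp only [Matrix.conjTranspose_apply, siteOp, Matrix.of_apply, delta_eq, star_mul']
  have h : (∀ k, k ≠ i → y k = x k) ↔ (∀ k, k ≠ i → x k = y k) := by
    constructor <;> intro h k hk <;> exact (h k hk).symm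
  rw [if_congr h rfl rfl]
  by_cases hc : ∀ k, k ≠ i → x k = y k
  · simp [hc]
  · simp [hc]

lemma collSpin_conjTranspose {N : ℕ} (M : Matrix (Fin 2) (Fin 2) ℂ) (hM : Mᴴ = M) :
    (collSpin (N := N) M)ᴴ = collSpin M := by
  unfold collSpin
  rw [Matrix.conjTranspose_smul, Matrix.conjTranspose_sum]
  simp [siteOp_conjTranspose, hM]

lemma σx_herm : σxᴴ = σx := by
  ext i j; fin_cases i <;> fin_cases j <;> simp [σx]
lemma σy_herm : σyᴴ = σy := by
  ext i j; fin_cases i <;> fin_cases j <;> simp [σy]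
lemma σz_herm : σzᴴ = σz := by
  ext i j; fin_cases i <;> fin_cases j <;> simp [σz]

lemma pauli_comm_yz : σy * σz - σz * σy = (2 * Complex.I) • σx := by
  ext i j
  fin_cases i <;> fin_cases j <;>
    simp [σx, σy, σz, Matrix.mul_apply, Fin.sum_univ_two] <;> ring

lemma collSpin_comm_yz {N : ℕ} :
    collSpin (N := N) σy * collSpin σz - collSpin σz * collSpin σy
      = Complex.I • collSpin σx := by
  unfold collSpin
  rw [Matrix.smul_mul, Matrix.mul_smul, Matrix.smul_mul, Matrix.mul_smul,
    smul_smul, smul_smul, ← smul_sub]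
  rw [Finset.sum_mul_sum, Finset.sum_mul_sum]
  have hswap : (∑ i : Fin N, ∑ j : Fin N, siteOp σz i * siteOp σy j)
      = ∑ i : Fin N, ∑ j : Fin N, siteOp σz j * siteOp σy i := Finset.sum_comm
  rw [hswap, ← Finset.sum_sub_distrib]
  have hdiag : ∀ i : Fin N,
      (∑ j : Fin N, siteOp σy i * siteOp σz j) - (∑ j : Fin N, siteOp σz j * siteOp σy i)
        = (2 * Complex.I) • siteOp σx i := by
    intro i
    rw [← Finset.sum_sub_distrib]
    rw [Finset.sum_eq_single i]
    · rw [siteOp_mul_same, siteOp_mul_same, ← siteOp_sub, pauli_comm_yz, siteOp_smul]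
    · intro j _ hji
      rw [siteOp_comm σy σz (Ne.symm hji), sub_self]
    · intro h; exact absurd (Finset.mem_univ i) h
  rw [Finset.sum_congr rfl (fun i _ => hdiag i), ← Finset.smul_sum, smul_smul, smul_smul]
  congr 1
  ring

lemma cs_dot {ι : Type*} [Fintype ι] (u v : ι → ℂ) :
    ‖star u ⬝ᵥ v‖ ^ 2 ≤ (star u ⬝ᵥ u).re * (star v ⬝ᵥ v).re := by
  have hd : ∀ a b : ι → ℂ,
      (inner ℂ ((WithLp.equiv 2 (ι → ℂ)).symm a) ((WithLp.equiv 2 (ι → ℂ)).symm b) : ℂ)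
        = star a ⬝ᵥ b := by
    intro a b
    simp [PiLp.inner_apply, dotProduct, RCLike.inner_apply, mul_comm]
  have h := inner_mul_inner_self_le (𝕜 := ℂ)
      ((WithLp.equiv 2 (ι → ℂ)).symm u) ((WithLp.equiv 2 (ι → ℂ)).symm v)
  rw [hd, hd, hd, hd] at h
  have hsame : star v ⬝ᵥ u = star (star u ⬝ᵥ v) := Matrix.star_dotProduct v u
  rw [hsame, norm_star] at h
  simpa [pow_two] using h

set_option maxHeartbeats 2000000 in
/-- Any pure state violating the two-setting Bell-correlation witness
`ζ² ≥ (1/2)(1 − √(1 − C²))` has QFI `F(ψ,S_z) = 4 Var_ψ(S_z) > 2N`. -/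
theorem qfi_gt_twice_shot_noise_of_witness_violation (N : ℕ) (hN : 1 ≤ N)
    (ψ : (Fin N → Fin 2) → ℂ) (hψ : star ψ ⬝ᵥ ψ = 1)
    (hSy : expval (collSpin σy) ψ = 0)
    (C ζsq : ℝ)
    (hC : C = expval (collSpin σx) ψ / (N / 2))
    (hζ : ζsq = expval (collSpin σy * collSpin σy) ψ / (N / 4))
    (hviol : ζsq < (1 / 2) * (1 - Real.sqrt (1 - C ^ 2))) :
    2 * N < 4 * variance (collSpin σz) ψ := by
  classical
  set Y : Matrix (Fin N → Fin 2) (Fin N → Fin 2) ℂ := collSpin σy with hY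
  set Z : Matrix (Fin N → Fin 2) (Fin N → Fin 2) ℂ := collSpin σz with hZ
  set X : Matrix (Fin N → Fin 2) (Fin N → Fin 2) ℂ := collSpin σx with hX
  have hYh : Yᴴ = Y := collSpin_conjTranspose σy σy_herm
  have hZh : Zᴴ = Z := collSpin_conjTranspose σz σz_herm
  -- hermitian dot product manipulation
  have herm : ∀ (A : Matrix (Fin N → Fin 2) (Fin N → Fin 2) ℂ), Aᴴ = A →
      ∀ w : (Fin N → Fin 2) → ℂ, star (A.mulVec ψ) ⬝ᵥ w = star ψ ⬝ᵥ A.mulVec w := by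
    intro A hA w
    rw [Matrix.star_mulVec, hA, ← Matrix.dotProduct_mulVec]
  set c : ℝ := expval Z ψ with hc
  set u : (Fin N → Fin 2) → ℂ := Y.mulVec ψ with hu
  set v : (Fin N → Fin 2) → ℂ := Z.mulVec ψ - (c : ℂ) • ψ with hv
  set α : ℂ := star u ⬝ᵥ v with hα
  set γ : ℂ := star ψ ⬝ᵥ Z.mulVec ψ with hγ
  set δ : ℂ := star ψ ⬝ᵥ Y.mulVec ψ with hδ
  set β : ℂ := star ψ ⬝ᵥ X.mulVec ψ with hβ
  have hγre : γ.re = c := rfl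
  -- ⟨u,u⟩
  have h_uu : star u ⬝ᵥ u = star ψ ⬝ᵥ (Y * Y).mulVec ψ := by
    rw [hu, herm Y hYh, Matrix.mulVec_mulVec]
  -- star v
  have hstarv : star v = star (Z.mulVec ψ) - (c : ℂ) • star ψ := by
    rw [hv, star_sub, star_smul]
    simp [Complex.conj_ofReal]
  -- ⟨v,v⟩ = variance
  have h_vv : (star v ⬝ᵥ v).re = variance Z ψ := by
    have e1 : star (Z.mulVec ψ) ⬝ᵥ Z.mulVec ψ = star ψ ⬝ᵥ (Z * Z).mulVec ψ := by
      rw [herm Z hZh, Matrix.mulVec_mulVec]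
    have e2 : star (Z.mulVec ψ) ⬝ᵥ ψ = γ := by rw [herm Z hZh]
    have : star v ⬝ᵥ v = star ψ ⬝ᵥ (Z * Z).mulVec ψ - (c : ℂ) * γ - (c : ℂ) * γ
        + (c : ℂ) * ((c : ℂ) * 1) := by
      rw [hstarv, hv, sub_dotProduct, dotProduct_sub, dotProduct_sub,
        dotProduct_smul, dotProduct_smul, smul_dotProduct,
        smul_dotProduct, e1, e2, hψ]
      simp [hγ, smul_eq_mul]
      ring
    rw [this, variance, expval, expval, ← hγ]
    simp only [Complex.add_re, Complex.sub_re, Complex.mul_re, Complex.ofReal_re,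
      Complex.ofReal_im, Complex.one_re, Complex.one_im, hγre]
    ring
  -- α in terms of matrix elements
  have hα1 : α = star ψ ⬝ᵥ (Y * Z).mulVec ψ - (c : ℂ) * δ := by
    rw [hα, hv, dotProduct_sub, dotProduct_smul, hu, herm Y hYh,
      herm Y hYh, Matrix.mulVec_mulVec]
    simp [hδ, smul_eq_mul]
  have hα2 : star α = star ψ ⬝ᵥ (Z * Y).mulVec ψ - (c : ℂ) * δ := by
    have : star α = star v ⬝ᵥ u := (Matrix.star_dotProduct v u).symm
    rw [this, hstarv, sub_dotProduct, smul_dotProduct, hu,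
      herm Z hZh, Matrix.mulVec_mulVec]
    simp [hδ, smul_eq_mul]
  -- commutator
  have hcomm : α - star α = Complex.I * β := by
    rw [hα2, hα1]
    have : star ψ ⬝ᵥ (Y * Z).mulVec ψ - (c:ℂ) * δ - (star ψ ⬝ᵥ (Z * Y).mulVec ψ - (c:ℂ) * δ)
        = star ψ ⬝ᵥ (Y * Z - Z * Y).mulVec ψ := by
      rw [Matrix.sub_mulVec, dotProduct_sub]
      ring
    rw [this, hY, hZ, collSpin_comm_yz, ← hX, Matrix.smul_mulVec,
      dotProduct_smul, smul_eq_mul, hβ]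
  have hβval : β = (2 * α.im : ℝ) := by
    have hsub : α - star α = (2 * α.im : ℝ) * Complex.I := by
      rw [show (star α) = (starRingEnd ℂ) α from rfl]
      exact_mod_cast Complex.sub_conj α
    have h2 : Complex.I * β = Complex.I * ((2 * α.im : ℝ) : ℂ) := by
      rw [← hcomm, hsub]; push_cast; ring
    exact mul_left_cancel₀ Complex.I_ne_zero h2
  -- key inequality
  have hEx : expval X ψ = 2 * α.im := by
    rw [expval, ← hβ, hβval]
    simp
  have hEyy : expval (Y * Y) ψ = (star u ⬝ᵥ u).re := by rw [expval, h_uu]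
  have hCS : ‖α‖ ^ 2 ≤ (star u ⬝ᵥ u).re * (star v ⬝ᵥ v).re := cs_dot u v
  have him : α.im ^ 2 ≤ ‖α‖ ^ 2 := by
    rw [Complex.sq_norm, Complex.normSq_apply]
    nlinarith [sq_nonneg α.re]
  have hkey : (expval X ψ) ^ 2 ≤ 4 * expval (Y * Y) ψ * variance Z ψ := by
    rw [hEx, hEyy, ← h_vv]
    nlinarith [hCS, him]
  -- nonnegativity of ⟨Y²⟩
  have hYY0 : 0 ≤ expval (Y * Y) ψ := by
    rw [hEyy]
    have h : star u ⬝ᵥ u = ∑ x : Fin N → Fin 2, ((Complex.normSq (u x) : ℝ) : ℂ) := by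
      simp only [dotProduct, Pi.star_apply, Complex.star_def,
        Complex.normSq_eq_conj_mul_self]
    rw [h, Complex.re_sum]
    apply Finset.sum_nonneg
    intro x _
    simp [Complex.normSq_nonneg]
  -- real algebra
  have hN0 : (0:ℝ) < N := by exact_mod_cast hN
  have hN2 : (N : ℝ) / 2 ≠ 0 := by positivity
  have hN4 : (N : ℝ) / 4 ≠ 0 := by positivity
  have hExv : expval X ψ = C * (N / 2) := by
    rw [hC, div_mul_cancel₀ _ hN2]
  have hEyyv : expval (Y * Y) ψ = ζsq * (N / 4) := by
    rw [hζ, div_mul_cancel₀ _ hN4]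
  have hζ0 : 0 ≤ ζsq := by
    rw [hEyyv] at hYY0
    nlinarith
  have h1s : 1 - Real.sqrt (1 - C ^ 2) ≤ C ^ 2 := by
    by_cases hC1 : C ^ 2 ≤ 1
    · have h0 : (0:ℝ) ≤ 1 - C ^ 2 := by linarith
      have : 1 - C ^ 2 ≤ Real.sqrt (1 - C ^ 2) := by
        rw [show Real.sqrt (1 - C^2) = Real.sqrt (1 - C^2) from rfl]
        nlinarith [Real.sq_sqrt h0, Real.sqrt_nonneg (1 - C^2)]
      linarith
    · have : Real.sqrt (1 - C ^ 2) = 0 := by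
        apply Real.sqrt_eq_zero_of_nonpos
        nlinarith
      rw [this]
      nlinarith
  have hζC : ζsq < C ^ 2 / 2 := by linarith
  have hC0 : 0 < C ^ 2 := by nlinarith
  have hkey' : (C * (N / 2)) ^ 2 ≤ 4 * (ζsq * (N / 4)) * variance Z ψ := by
    rw [← hExv, ← hEyyv]; exact hkey
  have hCne : C ≠ 0 := by
    intro h
    rw [h] at hC0
    simp at hC0
  rcases eq_or_lt_of_le hζ0 with hz | hz
  · exfalso
    rw [← hz] at hkey'
    have hpos : 0 < (C * ((N:ℝ) / 2)) ^ 2 := by positivity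
    nlinarith [hkey']
  · by_contra hcon
    push_neg at hcon
    set V := variance Z ψ with hV
    have h1 : (N:ℝ) * ζsq * V ≤ (N:ℝ) * ζsq * ((N:ℝ) / 2) := by
      have hnz : 0 ≤ (N:ℝ) * ζsq := le_of_lt (mul_pos hN0 hz)
      have : V ≤ (N:ℝ) / 2 := by linarith
      exact mul_le_mul_of_nonneg_left this hnz
    have h2 : (N:ℝ) * ζsq * ((N:ℝ) / 2) < C ^ 2 * ((N:ℝ) ^ 2 / 4) := by
      nlinarith [mul_pos hN0 hN0]
    nlinarith [hkey']
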